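/- (Chopping big trees into little trees.) Let T₀ be a convex lacunary tree, let a : T₀ → [0,∞) satisfy ‖a‖_{size*(T₀)} ≤ C₀, and let 0 < δ ≤ C₀. Then T₀ can be partitioned as a disjoint union T₀ = ⋃_{T∈𝐓} T ∪ 𝐏, where each T ∈ 𝐓 is a convex tree with ‖a‖_{size*(T)} ≤ δ, each tile P ∈ 𝐏 satisfies a(P) ≤ C₀|I_P|, and there is a constant C(C₀, δ) depending only on C₀ and δ such that both the set 𝐏 and the set of tree tops {P_T : T ∈ 𝐓} are uniform C(C₀, δ)-packings of T₀. -/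

import Mathlib

open MeasureTheory Set

noncomputable section

namespace Dyadic

/-- A dyadic interval/lacunary tile: `I = [j·2^k, (j+1)·2^k)` with `-M ≤ k ≤ M`,
`I ⊆ [0, 2^M)`.  Lacunary tiles are in bijection with dyadic intervals, so we
identify the tile `P⁺(I) = I × [1/|I|, 2/|I|)` with the data of `I`. -/
structure Tile (M : ℕ) where
  j : ℤ
  k : ℤ
  hk_lb : -(M : ℤ) ≤ k
  hk_ub : k ≤ (M : ℤ)
  hj : 0 ≤ j
  hsub : ((j : ℝ) + 1) * 2 ^ k ≤ 2 ^ (M : ℤ)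

variable {M : ℕ}

/-- The side length `|I_P| = 2^k` of the spatial interval of the tile. -/
def Tile.len (P : Tile M) : ℝ := 2 ^ P.k

/-- The spatial interval `I_P` of the tile. -/
def Tile.ival (P : Tile M) : Set ℝ :=
  Ico ((P.j : ℝ) * 2 ^ P.k) (((P.j : ℝ) + 1) * 2 ^ P.k)

/-- The order `P ≤′ Q` on lacunary tiles: `I_P ⊆ I_Q`. -/
def Tile.le (P Q : Tile M) : Prop := P.ival ⊆ Q.ival

/-- A (lacunary) tree: a collection of tiles together with a top tile. -/
structure Tree (M : ℕ) where
  tiles : Set (Tile M)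
  top : Tile M
  top_mem : top ∈ tiles
  le_top : ∀ P ∈ tiles, P.le top

/-- `|I_T|`, the length of the spatial interval of the top of the tree. -/
def Tree.len (T : Tree M) : ℝ := T.top.len

/-- A collection of tiles is convex if `P₁ ≤′ P ≤′ P₂` with `P₁, P₂` in the
collection implies `P` is in the collection. -/
def IsConvex (PP : Set (Tile M)) : Prop :=
  ∀ P₁ ∈ PP, ∀ P₂ ∈ PP, ∀ P : Tile M, P₁.le P → P.le P₂ → P ∈ PP

/-- The size `‖a‖_{size(T)} = (1/|I_T|) Σ_{P ∈ T} a(P)` of `a` on a tree `T`. -/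
def treeSize (a : Tile M → ℝ) (T : Tree M) : ℝ :=
  (∑ᶠ P ∈ T.tiles, a P) / T.len

/-- The maximal size `‖a‖_{size*(PP)}`: the supremum of `‖a‖_{size(T)}` over all
convex trees `T ⊆ PP` (by convention `0` if there are none). -/
def maxSize (a : Tile M → ℝ) (PP : Set (Tile M)) : ℝ :=
  sSup (insert 0 {s : ℝ | ∃ T : Tree M, T.tiles ⊆ PP ∧ IsConvex T.tiles ∧ s = treeSize a T})

/-- The complete tree `Tree(P) = {Q : Q ≤′ P}`. -/
def cTree (P : Tile M) : Set (Tile M) := {Q : Tile M | Q.le P}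

/-- A tree `T` is complete with respect to `PP` if `T = Tree(P_T) ∩ PP`. -/
def Tree.IsCompleteIn (T : Tree M) (PP : Set (Tile M)) : Prop :=
  T.tiles = cTree T.top ∩ PP

/-- `QQ` is an `α`-packing of the tree `T`: `QQ ⊆ T` and `Σ_{P ∈ QQ} |I_P| ≤ α|I_T|`. -/
def IsPacking (α : ℝ) (QQ : Set (Tile M)) (T : Tree M) : Prop :=
  QQ ⊆ T.tiles ∧ (∑ᶠ P ∈ QQ, Tile.len P) ≤ α * T.len

/-- `QQ` is a uniform `α`-packing of the tree `T`:
`Σ_{P ∈ QQ, I_P ⊆ J} |I_P| ≤ α|J|` for every dyadic interval `J`. -/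
def IsUniformPacking (α : ℝ) (QQ : Set (Tile M)) (T : Tree M) : Prop :=
  QQ ⊆ T.tiles ∧
    ∀ J : Tile M, (∑ᶠ P ∈ {P ∈ QQ | P.ival ⊆ J.ival}, Tile.len P) ≤ α * J.len

/-- Left half of the spatial interval. -/
def Tile.left (P : Tile M) : Set ℝ :=
  Ico ((P.j : ℝ) * 2 ^ P.k) (((P.j : ℝ) + 1 / 2) * 2 ^ P.k)

/-- Right half of the spatial interval. -/
def Tile.right (P : Tile M) : Set ℝ :=
  Ico (((P.j : ℝ) + 1 / 2) * 2 ^ P.k) (((P.j : ℝ) + 1) * 2 ^ P.k)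

/-- The (mother) Haar wavelet `φ_P = |I_P|^{-1/2}(χ_{I_l} - χ_{I_r})`. -/
def Tile.haar (P : Tile M) : ℝ → ℝ := fun x =>
  (Real.sqrt P.len)⁻¹ * (P.left.indicator 1 x - P.right.indicator 1 x)

/-- The Haar (wavelet) coefficient `Wf(P) = ⟨f, φ_P⟩`. -/
def waveCoeff (f : ℝ → ℝ) (P : Tile M) : ℝ := ∫ x, f x * P.haar x

/-- The average `[f]_{I_P} = (1/|I_P|)∫_{I_P} f`. -/
def tileAvg (f : ℝ → ℝ) (P : Tile M) : ℝ := (∫ x in P.ival, f x) / P.len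

/-- The mean `‖f‖_{mean(P)} = (1/|I_P|)∫_{I_P} |f|`. -/
def tileMean (f : ℝ → ℝ) (P : Tile M) : ℝ := (∫ x in P.ival, |f x|) / P.len

/-- The maximal mean `‖f‖_{mean*(PP)} = sup_{P ∈ PP} ‖f‖_{mean(P)}`. -/
def maxMean (f : ℝ → ℝ) (PP : Set (Tile M)) : ℝ :=
  sSup (insert 0 (tileMean f '' PP))

/-- The dyadic BMO norm `‖f‖_{BMO} = ‖|Wf|²‖_{size*(PP⁺)}^{1/2}`. -/
def bmoNorm (M : ℕ) (f : ℝ → ℝ) : ℝ :=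
  Real.sqrt (maxSize (fun P : Tile M => waveCoeff f P ^ 2) univ)

/-- The grid interval `[j·2^{-M}, (j+1)·2^{-M})` at the finest scale. -/
def gridIval (M : ℕ) (j : ℤ) : Set ℝ :=
  Ico ((j : ℝ) * 2 ^ (-(M : ℤ))) (((j : ℝ) + 1) * 2 ^ (-(M : ℤ)))

/-- A dyadic test function: supported on `[0, 2^M)` and constant on every dyadic
interval of length `2^{-M}`. -/
def IsTestFun (M : ℕ) (f : ℝ → ℝ) : Prop :=
  (∀ x : ℝ, x ∉ Ico (0 : ℝ) (2 ^ (M : ℤ)) → f x = 0) ∧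
    ∀ j : ℤ, ∀ x ∈ gridIval M j, ∀ y ∈ gridIval M j, f x = f y

/-- The `L²` norm. -/
def l2Norm (f : ℝ → ℝ) : ℝ := Real.sqrt (∫ x, f x ^ 2)

/-- The `L^∞` norm (as a supremum of values; adequate for test functions). -/
def supNorm (f : ℝ → ℝ) : ℝ := ⨆ x : ℝ, |f x|

/-- The weak `L^r` quasinorm `sup_{λ>0} λ |{|h| ≥ λ}|^{1/r}`. -/
def weakNorm (r : ℝ) (h : ℝ → ℝ) : ℝ :=
  sSup {s : ℝ | ∃ l : ℝ, 0 < l ∧ s = l * (volume {x : ℝ | l ≤ |h x|}).toReal ^ (1 / r)}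

/-- The phase space projection `Π_T f = Σ_{P ∈ T} ⟨f, φ_P⟩ φ_P` onto a tree. -/
def treeProj (T : Tree M) (f : ℝ → ℝ) : ℝ → ℝ := fun x =>
  ∑ᶠ P ∈ T.tiles, waveCoeff f P * P.haar x

/-- The high-low paraproduct `π_hl(f,g) = Σ_P Wf(P) [g]_P φ_P`. -/
def paraHL (M : ℕ) (f g : ℝ → ℝ) : ℝ → ℝ := fun x =>
  ∑ᶠ P : Tile M, waveCoeff f P * tileAvg g P * P.haar x

/-- The low-high paraproduct `π_lh(f,g) = Σ_P [f]_P Wg(P) φ_P`. -/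
def paraLH (M : ℕ) (f g : ℝ → ℝ) : ℝ → ℝ := fun x =>
  ∑ᶠ P : Tile M, tileAvg f P * waveCoeff g P * P.haar x

/-- The high-high paraproduct `π_hh(f,g) = Σ_P Wf(P) Wg(P) χ_{I_P}/|I_P|`. -/
def paraHH (M : ℕ) (f g : ℝ → ℝ) : ℝ → ℝ := fun x =>
  ∑ᶠ P : Tile M, waveCoeff f P * waveCoeff g P * P.ival.indicator 1 x / P.len

/-- The constant function `1` on `[0, 2^M)`. -/
def oneFn (M : ℕ) : ℝ → ℝ := (Ico (0 : ℝ) (2 ^ (M : ℤ))).indicator 1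

/-- A perfect dyadic Calderón–Zygmund operator, recorded via its kernel `K` and
kernel constant `A₀`. -/
structure PDCZ (M : ℕ) where
  K : ℝ → ℝ → ℝ
  A₀ : ℝ
  hA₀ : 0 < A₀
  meas : Measurable (Function.uncurry K)
  bound : ∀ x y : ℝ, x ≠ y → |K x y| ≤ A₀ / |x - y|
  perfectX : ∀ I J : Tile M, Disjoint I.ival J.ival →
    ∀ x ∈ I.ival, ∀ x' ∈ I.ival, ∀ y ∈ J.ival, K x y = K x' y
  perfectY : ∀ I J : Tile M, Disjoint I.ival J.ival →
    ∀ x ∈ I.ival, ∀ x' ∈ I.ival, ∀ y ∈ J.ival, K y x = K y x'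
  diag : ∀ I : Tile M, I.k = -(M : ℤ) → ∀ x ∈ I.ival, ∀ y ∈ I.ival, K x y = 0
  corner₁ : ∀ x ∈ Ico (0 : ℝ) (2 ^ ((M : ℤ) - 1)),
    ∀ y ∈ Ico ((2 : ℝ) ^ ((M : ℤ) - 1)) (2 ^ (M : ℤ)), K x y = 0
  corner₂ : ∀ x ∈ Ico ((2 : ℝ) ^ ((M : ℤ) - 1)) (2 ^ (M : ℤ)),
    ∀ y ∈ Ico (0 : ℝ) (2 ^ ((M : ℤ) - 1)), K x y = 0

/-- `Tf(x) = ∫ K(x,y) f(y) dy`. -/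
def PDCZ.app (Op : PDCZ M) (f : ℝ → ℝ) : ℝ → ℝ := fun x => ∫ y, Op.K x y * f y

/-- The transpose `T*f(x) = ∫ K(y,x) f(y) dy`. -/
def PDCZ.appT (Op : PDCZ M) (f : ℝ → ℝ) : ℝ → ℝ := fun x => ∫ y, Op.K y x * f y

/-- Complex-valued Haar coefficient. -/
def waveCoeffC (b : ℝ → ℂ) (P : Tile M) : ℂ := ∫ x, b x * (P.haar x : ℂ)

/-- Complex-valued average. -/
def tileAvgC (b : ℝ → ℂ) (P : Tile M) : ℂ := (∫ x in P.ival, b x) / (P.len : ℂ)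

/-- BMO norm of a complex-valued function. -/
def bmoNormC (M : ℕ) (b : ℝ → ℂ) : ℝ :=
  Real.sqrt (maxSize (fun P : Tile M => ‖waveCoeffC b P‖ ^ 2) univ)

/-- Complex-valued dyadic test functions. -/
def IsTestFunC (M : ℕ) (b : ℝ → ℂ) : Prop :=
  (∀ x : ℝ, x ∉ Ico (0 : ℝ) (2 ^ (M : ℤ)) → b x = 0) ∧
    ∀ j : ℤ, ∀ x ∈ gridIval M j, ∀ y ∈ gridIval M j, b x = b y

/-- The operator applied to a complex-valued function. -/
def PDCZ.appC (Op : PDCZ M) (b : ℝ → ℂ) : ℝ → ℂ := fun x => ∫ y, (Op.K x y : ℂ) * b y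




-- basic lemmas
lemma two_zpow_pos (k : ℤ) : (0:ℝ) < 2 ^ k := by positivity

lemma Tile.len_pos (P : Tile M) : 0 < P.len := two_zpow_pos _

lemma Tile.lt_ival (P : Tile M) : (P.j : ℝ) * 2 ^ P.k < ((P.j : ℝ) + 1) * 2 ^ P.k := by
  have := two_zpow_pos P.k; nlinarith

lemma Tile.ival_nonempty (P : Tile M) : P.ival.Nonempty := by
  exact ⟨_, left_mem_Ico.2 P.lt_ival⟩

lemma Tile.le_refl (P : Tile M) : P.le P := subset_rfl
lemma Tile.le_trans {P Q R : Tile M} (h1 : P.le Q) (h2 : Q.le R) : P.le R := h1.trans h2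

lemma Tile.eq_of_params {P Q : Tile M} (hj : P.j = Q.j) (hk : P.k = Q.k) : P = Q := by
  cases P; cases Q; simp_all

lemma Tile.le_antisymm {P Q : Tile M} (h1 : P.le Q) (h2 : Q.le P) : P = Q := by
  obtain ⟨a1, b1⟩ := (Ico_subset_Ico_iff P.lt_ival).1 h1
  obtain ⟨a2, b2⟩ := (Ico_subset_Ico_iff Q.lt_ival).1 h2
  have ha : (P.j : ℝ) * 2 ^ P.k = (Q.j : ℝ) * 2 ^ Q.k := _root_.le_antisymm a2 a1
  have hb : ((P.j : ℝ) + 1) * 2 ^ P.k = ((Q.j : ℝ) + 1) * 2 ^ Q.k := _root_.le_antisymm b1 b2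
  have hlen : (2:ℝ) ^ P.k = 2 ^ Q.k := by nlinarith
  have hk : P.k = Q.k := zpow_right_injective₀ (by norm_num : (0:ℝ) < 2) (by norm_num) hlen
  have hj : P.j = Q.j := by
    have := two_zpow_pos P.k
    have hjr : (P.j : ℝ) = Q.j := by
      rw [hk] at ha
      exact mul_right_cancel₀ (two_zpow_pos Q.k).ne' ha
    exact_mod_cast hjr
  exact Tile.eq_of_params hj hk

instance : PartialOrder (Tile M) where
  le := Tile.le
  le_refl := Tile.le_refl
  le_trans := fun _ _ _ => Tile.le_trans
  le_antisymm := fun _ _ => Tile.le_antisymm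

lemma Tile.le_def {P Q : Tile M} : P ≤ Q ↔ P.ival ⊆ Q.ival := Iff.rfl

lemma Tile.le_eq {P Q : Tile M} : P.le Q ↔ P ≤ Q := Iff.rfl

lemma Tile.le_iff {P Q : Tile M} :
    P ≤ Q ↔ (Q.j : ℝ) * 2 ^ Q.k ≤ (P.j : ℝ) * 2 ^ P.k ∧
      ((P.j : ℝ) + 1) * 2 ^ P.k ≤ ((Q.j : ℝ) + 1) * 2 ^ Q.k := by
  exact Ico_subset_Ico_iff P.lt_ival

lemma Tile.k_le_of_le {P Q : Tile M} (h : P ≤ Q) : P.k ≤ Q.k := by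
  obtain ⟨a, b⟩ := Tile.le_iff.1 h
  have : (2:ℝ) ^ P.k ≤ 2 ^ Q.k := by nlinarith
  rwa [zpow_le_zpow_iff_right₀ (by norm_num : (1:ℝ) < 2)] at this

lemma Tile.len_le_of_le {P Q : Tile M} (h : P ≤ Q) : P.len ≤ Q.len := by
  have := Tile.k_le_of_le h
  exact (zpow_le_zpow_iff_right₀ (by norm_num : (1:ℝ) < 2)).2 this

/-- Dyadic trichotomy. -/
lemma Tile.le_or_disjoint {P Q : Tile M} (hk : P.k ≤ Q.k) :
    P ≤ Q ∨ Disjoint P.ival Q.ival := by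
  rcases Set.disjoint_or_nonempty_inter P.ival Q.ival with h | ⟨x, hxP, hxQ⟩
  · exact Or.inr h
  left
  obtain ⟨hP1, hP2⟩ := hxP
  obtain ⟨hQ1, hQ2⟩ := hxQ
  set d : ℤ := Q.k - P.k with hd
  have hd0 : 0 ≤ d := by omega
  have h2d : (2:ℝ) ^ Q.k = 2 ^ d * 2 ^ P.k := by
    rw [← zpow_add₀ (by norm_num : (2:ℝ) ≠ 0)]; congr 1; omega
  have hpk := two_zpow_pos P.k
  have hdk := two_zpow_pos d
  -- integer bounds: Q.j * 2^d ≤ P.j ≤ (Q.j+1) * 2^d - 1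
  have hlow : Q.j * 2 ^ d.toNat ≤ P.j := by
    by_contra hc
    push_neg at hc
    have hc2 : P.j + 1 ≤ Q.j * 2 ^ d.toNat := by omega
    have hc' : (P.j : ℝ) + 1 ≤ (Q.j:ℝ) * 2 ^ d.toNat := by exact_mod_cast hc2
    have h2dn : ((2:ℝ) ^ d.toNat : ℝ) = 2 ^ d := by
      rw [← zpow_natCast]; congr 1; omega
    rw [h2dn] at hc'
    -- then (P.j+1) * 2^P.k ≤ Q.j * 2^Q.k ≤ x < (P.j+1)*2^P.k
    have : ((P.j:ℝ) + 1) * 2 ^ P.k ≤ (Q.j:ℝ) * 2 ^ Q.k := by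
      rw [h2d]; nlinarith
    linarith
  have hhigh : P.j + 1 ≤ (Q.j + 1) * 2 ^ d.toNat := by
    by_contra hc
    push_neg at hc
    have hc2 : (Q.j + 1) * 2 ^ d.toNat ≤ P.j := by omega
    have hc' : ((Q.j : ℝ) + 1) * 2 ^ d.toNat ≤ (P.j:ℝ) := by exact_mod_cast hc2
    have h2dn : ((2:ℝ) ^ d.toNat : ℝ) = 2 ^ d := by
      rw [← zpow_natCast]; congr 1; omega
    rw [h2dn] at hc'
    have : ((Q.j:ℝ) + 1) * 2 ^ Q.k ≤ (P.j:ℝ) * 2 ^ P.k := by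
      rw [h2d]; nlinarith
    linarith
  have h2dn : ((2:ℝ) ^ d.toNat : ℝ) = 2 ^ d := by
    rw [← zpow_natCast]; congr 1; omega
  have hlowR : ((Q.j : ℝ)) * 2 ^ d ≤ P.j := by
    rw [← h2dn]; exact_mod_cast hlow
  have hhighR : ((P.j : ℝ)) + 1 ≤ ((Q.j:ℝ) + 1) * 2 ^ d := by
    rw [← h2dn]; exact_mod_cast hhigh
  rw [Tile.le_iff]
  constructor
  · rw [h2d]; nlinarith
  · rw [h2d]; nlinarith

/-- Tiles above a common tile are comparable. -/
lemma Tile.le_total_of_le {P Q R : Tile M} (h1 : P ≤ Q) (h2 : P ≤ R) : Q ≤ R ∨ R ≤ Q := by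
  rcases le_total Q.k R.k with hk | hk
  · rcases Tile.le_or_disjoint hk with h | h
    · exact Or.inl h
    · exfalso
      obtain ⟨x, hx⟩ := P.ival_nonempty
      exact (h.le_bot ⟨h1 hx, h2 hx⟩ : x ∈ (⊥ : Set ℝ))
  · rcases Tile.le_or_disjoint hk with h | h
    · exact Or.inr h
    · exfalso
      obtain ⟨x, hx⟩ := P.ival_nonempty
      exact (h.le_bot ⟨h2 hx, h1 hx⟩ : x ∈ (⊥ : Set ℝ))

lemma Tile.disjoint_of_incomp {P Q : Tile M} (h1 : ¬ P ≤ Q) (h2 : ¬ Q ≤ P) :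
    Disjoint P.ival Q.ival := by
  rcases le_total P.k Q.k with hk | hk
  · rcases Tile.le_or_disjoint hk with h | h
    · exact absurd h h1
    · exact h
  · rcases Tile.le_or_disjoint hk with h | h
    · exact absurd h h2
    · exact h.symm


lemma Tile.j_le (P : Tile M) : P.j ≤ 2 ^ (2 * M) := by
  have h1 : ((P.j : ℝ) + 1) * 2 ^ (-(M:ℤ)) ≤ ((P.j : ℝ) + 1) * 2 ^ P.k := by
    have := two_zpow_pos P.k
    have h2 : (2:ℝ) ^ (-(M:ℤ)) ≤ 2 ^ P.k :=
      (zpow_le_zpow_iff_right₀ (by norm_num : (1:ℝ) < 2)).2 P.hk_lb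
    have hj : (0:ℝ) ≤ P.j := by exact_mod_cast P.hj
    nlinarith [two_zpow_pos (-(M:ℤ))]
  have h2 : ((P.j : ℝ) + 1) * 2 ^ (-(M:ℤ)) ≤ 2 ^ (M:ℤ) := h1.trans P.hsub
  have h3 : ((P.j : ℝ) + 1) ≤ 2 ^ ((M:ℤ) + M) := by
    have hpos := two_zpow_pos (-(M:ℤ))
    have : (2:ℝ) ^ ((M:ℤ) + M) * 2 ^ (-(M:ℤ)) = 2 ^ (M:ℤ) := by
      rw [← zpow_add₀ (by norm_num : (2:ℝ) ≠ 0)]; congr 1; omega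
    nlinarith
  have h4 : ((P.j : ℝ) + 1) ≤ ((2 ^ (2 * M) : ℤ) : ℝ) := by
    refine h3.trans (le_of_eq ?_)
    push_cast
    rw [← zpow_natCast (2:ℝ) (2*M)]
    congr 1
    push_cast
    ring
  have : (P.j : ℝ) ≤ ((2 ^ (2 * M) : ℤ) : ℝ) := by linarith
  exact_mod_cast this

instance : Finite (Tile M) := by
  let s : Finset (ℤ × ℤ) := Finset.Icc 0 (2 ^ (2 * M)) ×ˢ Finset.Icc (-(M:ℤ)) M
  have hf : ∀ P : Tile M, (P.j, P.k) ∈ s := by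
    intro P
    simp only [s, Finset.mem_product, Finset.mem_Icc]
    exact ⟨⟨P.hj, P.j_le⟩, P.hk_lb, P.hk_ub⟩
  exact Finite.of_injective (fun P : Tile M => (⟨(P.j, P.k), hf P⟩ : {x // x ∈ s}))
    (fun P Q h => Tile.eq_of_params (congrArg (Prod.fst ∘ Subtype.val) h)
      (congrArg (Prod.snd ∘ Subtype.val) h))

instance : Fintype (Tile M) := Fintype.ofFinite _

attribute [local instance] Classical.propDecidable

lemma Tile.eq_of_le_of_k_le {P Q : Tile M} (h : P ≤ Q) (hk : Q.k ≤ P.k) : P = Q := by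
  have hk' : P.k = Q.k := _root_.le_antisymm (Tile.k_le_of_le h) hk
  obtain ⟨a, bb⟩ := Tile.le_iff.1 h
  apply Tile.eq_of_params _ hk'
  rw [hk'] at a
  have h2 := two_zpow_pos Q.k
  have : (Q.j : ℝ) ≤ P.j := by nlinarith
  have h2' : (P.j:ℝ) ≤ Q.j := by rw [hk'] at bb; nlinarith
  have : (P.j : ℝ) = Q.j := _root_.le_antisymm h2' this
  exact_mod_cast this

lemma two_zpow_succ (k : ℤ) : (2:ℝ) ^ k = 2 ^ (k - 1) * 2 := by
  rw [← zpow_add_one₀ (by norm_num : (2:ℝ) ≠ 0)]; congr 1; omega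

/-- Left child. -/
def Tile.lchild (P : Tile M) (h : -(M:ℤ) < P.k) : Tile M where
  j := 2 * P.j
  k := P.k - 1
  hk_lb := by omega
  hk_ub := by have := P.hk_ub; omega
  hj := by have := P.hj; omega
  hsub := by
    have h2 := two_zpow_succ P.k
    have hp := two_zpow_pos (P.k - 1)
    have hs := P.hsub
    rw [h2] at hs
    push_cast
    nlinarith

/-- Right child. -/
def Tile.rchild (P : Tile M) (h : -(M:ℤ) < P.k) : Tile M where
  j := 2 * P.j + 1
  k := P.k - 1
  hk_lb := by omega
  hk_ub := by have := P.hk_ub; omega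
  hj := by have := P.hj; omega
  hsub := by
    have h2 := two_zpow_succ P.k
    have hp := two_zpow_pos (P.k - 1)
    have hs := P.hsub
    rw [h2] at hs
    push_cast
    nlinarith

lemma Tile.lchild_ival (P : Tile M) (h : -(M:ℤ) < P.k) :
    (P.lchild h).ival = Ico ((P.j:ℝ) * 2 ^ P.k) (((2 * P.j + 1 : ℤ) : ℝ) * 2 ^ (P.k - 1)) := by
  have e1 : ((2 * P.j : ℤ) : ℝ) * 2 ^ (P.k - 1) = (P.j:ℝ) * 2 ^ P.k := by
    push_cast; rw [two_zpow_succ P.k]; ring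
  have e2 : (((2 * P.j : ℤ) : ℝ) + 1) * 2 ^ (P.k - 1) = ((2 * P.j + 1 : ℤ) : ℝ) * 2 ^ (P.k - 1) := by
    push_cast; ring
  show Ico (((2 * P.j : ℤ) : ℝ) * 2 ^ (P.k - 1)) ((((2 * P.j : ℤ) : ℝ) + 1) * 2 ^ (P.k - 1)) = _
  rw [e1, e2]

lemma Tile.rchild_ival (P : Tile M) (h : -(M:ℤ) < P.k) :
    (P.rchild h).ival = Ico (((2 * P.j + 1 : ℤ) : ℝ) * 2 ^ (P.k - 1)) (((P.j:ℝ) + 1) * 2 ^ P.k) := by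
  have e2 : (((2 * P.j + 1 : ℤ) : ℝ) + 1) * 2 ^ (P.k - 1) = ((P.j:ℝ) + 1) * 2 ^ P.k := by
    push_cast; rw [two_zpow_succ P.k]; ring
  show Ico (((2 * P.j + 1 : ℤ) : ℝ) * 2 ^ (P.k - 1)) ((((2 * P.j + 1 : ℤ) : ℝ) + 1) * 2 ^ (P.k - 1)) = _
  rw [e2]

lemma Tile.ival_union (P : Tile M) (h : -(M:ℤ) < P.k) :
    (P.lchild h).ival ∪ (P.rchild h).ival = P.ival := by
  rw [Tile.lchild_ival P h, Tile.rchild_ival P h]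
  apply Ico_union_Ico_eq_Ico
  · have hp := two_zpow_pos (P.k - 1)
    rw [two_zpow_succ P.k]
    push_cast
    nlinarith
  · have hp := two_zpow_pos (P.k - 1)
    rw [two_zpow_succ P.k]
    push_cast
    nlinarith

lemma Tile.children_disjoint (P : Tile M) (h : -(M:ℤ) < P.k) :
    Disjoint (P.lchild h).ival (P.rchild h).ival := by
  rw [Tile.lchild_ival P h, Tile.rchild_ival P h]
  exact Set.Ico_disjoint_Ico_same

lemma Tile.lchild_le (P : Tile M) (h : -(M:ℤ) < P.k) : P.lchild h ≤ P := by
  rw [Tile.le_def, ← Tile.ival_union P h]; exact subset_union_left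

lemma Tile.rchild_le (P : Tile M) (h : -(M:ℤ) < P.k) : P.rchild h ≤ P := by
  rw [Tile.le_def, ← Tile.ival_union P h]; exact subset_union_right

lemma Tile.lchild_k (P : Tile M) (h : -(M:ℤ) < P.k) : (P.lchild h).k = P.k - 1 := rfl
lemma Tile.rchild_k (P : Tile M) (h : -(M:ℤ) < P.k) : (P.rchild h).k = P.k - 1 := rfl

lemma Tile.lchild_ne (P : Tile M) (h : -(M:ℤ) < P.k) : P.lchild h ≠ P := by
  intro hc
  have : (P.lchild h).k = P.k := by rw [hc]
  rw [Tile.lchild_k] at this; omega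

lemma Tile.rchild_ne (P : Tile M) (h : -(M:ℤ) < P.k) : P.rchild h ≠ P := by
  intro hc
  have : (P.rchild h).k = P.k := by rw [hc]
  rw [Tile.rchild_k] at this; omega

lemma Tile.children_not_comp (P : Tile M) (h : -(M:ℤ) < P.k) :
    ¬ (P.lchild h ≤ P.rchild h ∨ P.rchild h ≤ P.lchild h) := by
  rintro (hc | hc)
  · obtain ⟨x, hx⟩ := (P.lchild h).ival_nonempty
    exact ((Tile.children_disjoint P h).le_bot ⟨hx, hc hx⟩ : x ∈ (⊥ : Set ℝ))
  · obtain ⟨x, hx⟩ := (P.rchild h).ival_nonempty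
    exact ((Tile.children_disjoint P h).le_bot ⟨hc hx, hx⟩ : x ∈ (⊥ : Set ℝ))

/-- A strictly smaller tile is below one of the two children. -/
lemma Tile.le_child (P R : Tile M) (h : -(M:ℤ) < P.k) (hle : R ≤ P) (hne : R ≠ P) :
    R ≤ P.lchild h ∨ R ≤ P.rchild h := by
  have hk : R.k ≤ P.k - 1 := by
    by_contra hc
    exact hne (Tile.eq_of_le_of_k_le hle (by omega))
  obtain ⟨x, hx⟩ := R.ival_nonempty
  have hxP : x ∈ P.ival := hle hx
  rw [← Tile.ival_union P h] at hxP
  rcases hxP with hxl | hxl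
  · left
    rcases @Tile.le_or_disjoint M R (P.lchild h) (by rw [Tile.lchild_k]; omega) with h' | h'
    · exact h'
    · exact absurd (h'.le_bot ⟨hx, hxl⟩) (by simp)
  · right
    rcases @Tile.le_or_disjoint M R (P.rchild h) (by rw [Tile.rchild_k]; omega) with h' | h'
    · exact h'
    · exact absurd (h'.le_bot ⟨hx, hxl⟩) (by simp)

lemma Tile.volume_ival (P : Tile M) : MeasureTheory.volume P.ival = ENNReal.ofReal P.len := by
  rw [Tile.ival, Real.volume_Ico]
  congr 1
  unfold Tile.len
  ring

/-- Sum of lengths of pairwise disjoint tiles inside `J` is at most `J.len`. -/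
lemma sum_len_le {F : Finset (Tile M)} {J : Tile M}
    (hsub : ∀ P ∈ F, P.ival ⊆ J.ival)
    (hdisj : ∀ P ∈ F, ∀ Q ∈ F, P ≠ Q → Disjoint P.ival Q.ival) :
    ∑ P ∈ F, P.len ≤ J.len := by
  have hmeas : ∀ P ∈ F, MeasurableSet P.ival := fun P _ => measurableSet_Ico
  have h1 : MeasureTheory.volume (⋃ P ∈ F, P.ival) = ∑ P ∈ F, MeasureTheory.volume P.ival := by
    refine MeasureTheory.measure_biUnion_finset ?_ hmeas
    intro P hP Q hQ hne
    exact hdisj P hP Q hQ hne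
  have h2 : (⋃ P ∈ F, P.ival) ⊆ J.ival := by
    simp only [iUnion_subset_iff]; exact hsub
  have h3 : ∑ P ∈ F, MeasureTheory.volume P.ival ≤ ENNReal.ofReal J.len := by
    rw [← h1, ← Tile.volume_ival]
    exact MeasureTheory.measure_mono h2
  have h4 : ENNReal.ofReal (∑ P ∈ F, P.len) ≤ ENNReal.ofReal J.len := by
    rw [ENNReal.ofReal_sum_of_nonneg (fun P _ => P.len_pos.le)]
    simpa only [Tile.volume_ival] using h3
  exact (ENNReal.ofReal_le_ofReal_iff J.len_pos.le).1 h4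

/-! ### The stopping-time mass function -/

lemma Tile.k_lt_of_lt {R Q : Tile M} (h : R ≤ Q) (hne : R ≠ Q) : R.k < Q.k := by
  rcases lt_or_ge R.k Q.k with h' | h'
  · exact h'
  · exact absurd (Tile.eq_of_le_of_k_le h h') hne

noncomputable def mA (b : Tile M → ℝ) (δ : ℝ) : ℕ → Tile M → ℝ
  | 0, P => b P
  | n+1, P =>
    if h : -(M:ℤ) < P.k then
      b P +
        (if δ * (P.lchild h).len ≤ mA b δ n (P.lchild h) then 0 else mA b δ n (P.lchild h)) +
        (if δ * (P.rchild h).len ≤ mA b δ n (P.rchild h) then 0 else mA b δ n (P.rchild h))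
    else b P

noncomputable def mf (b : Tile M → ℝ) (δ : ℝ) (P : Tile M) : ℝ := mA b δ (P.k + M).toNat P

lemma mA_stable (b : Tile M → ℝ) (δ : ℝ) :
    ∀ n (P : Tile M), (P.k + (M:ℤ)).toNat ≤ n → mA b δ (n+1) P = mA b δ n P := by
  intro n
  induction n with
  | zero =>
    intro P hP
    have h : ¬ -(M:ℤ) < P.k := by have := P.hk_lb; omega
    simp [mA, h]
  | succ n ih =>
    intro P hP
    by_cases h : -(M:ℤ) < P.k
    · have hc1 : ((P.lchild h).k + (M:ℤ)).toNat ≤ n := by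
        have h1 : (P.lchild h).k = P.k - 1 := rfl
        omega
      have hc2 : ((P.rchild h).k + (M:ℤ)).toNat ≤ n := by
        have h1 : (P.rchild h).k = P.k - 1 := rfl
        omega
      conv_lhs => rw [mA]
      conv_rhs => rw [mA]
      rw [dif_pos h, dif_pos h, ih _ hc1, ih _ hc2]
    · conv_lhs => rw [mA]
      conv_rhs => rw [mA]
      rw [dif_neg h, dif_neg h]

lemma mA_eq_mf (b : Tile M → ℝ) (δ : ℝ) :
    ∀ n (P : Tile M), (P.k + (M:ℤ)).toNat ≤ n → mA b δ n P = mf b δ P := by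
  intro n
  induction n with
  | zero =>
    intro P hP
    have : (P.k + (M:ℤ)).toNat = 0 := by omega
    rw [mf, this]
  | succ n ih =>
    intro P hP
    rcases Nat.lt_or_ge n ((P.k + (M:ℤ)).toNat) with h | h
    · have : (P.k + (M:ℤ)).toNat = n+1 := by omega
      rw [mf, this]
    · rw [mA_stable b δ n P h, ih P h]

lemma mf_rec_base (b : Tile M → ℝ) (δ : ℝ) (P : Tile M) (h : ¬ -(M:ℤ) < P.k) :
    mf b δ P = b P := by
  have h0 : (P.k + (M:ℤ)).toNat = 0 := by have := P.hk_lb; omega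
  rw [mf, h0, mA]

lemma mf_rec (b : Tile M → ℝ) (δ : ℝ) (P : Tile M) (h : -(M:ℤ) < P.k) :
    mf b δ P = b P +
      (if δ * (P.lchild h).len ≤ mf b δ (P.lchild h) then 0 else mf b δ (P.lchild h)) +
      (if δ * (P.rchild h).len ≤ mf b δ (P.rchild h) then 0 else mf b δ (P.rchild h)) := by
  have hn : (P.k + (M:ℤ)).toNat = ((P.k - 1) + (M:ℤ)).toNat + 1 := by have := P.hk_lb; omega
  have hc1 : ((P.lchild h).k + (M:ℤ)).toNat ≤ ((P.k - 1) + (M:ℤ)).toNat := le_of_eq rfl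
  have hc2 : ((P.rchild h).k + (M:ℤ)).toNat ≤ ((P.k - 1) + (M:ℤ)).toNat := le_of_eq rfl
  rw [mf, hn]
  show (if h' : -(M:ℤ) < P.k then _ else _) = _
  rw [dif_pos h, mA_eq_mf b δ _ _ hc1, mA_eq_mf b δ _ _ hc2]

def MStop (b : Tile M → ℝ) (δ : ℝ) (P : Tile M) : Prop := δ * P.len ≤ mf b δ P

def mgood (b : Tile M → ℝ) (δ : ℝ) (R Q : Tile M) : Prop :=
  R ≤ Q ∧ ∀ S : Tile M, R ≤ S → S ≤ Q → S ≠ Q → ¬ MStop b δ S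

lemma mgood_self (b : Tile M → ℝ) (δ : ℝ) (Q : Tile M) : mgood b δ Q Q :=
  ⟨le_rfl, fun S h1 h2 hne => absurd (le_antisymm h2 h1) hne⟩

lemma mf_eq_sum (b : Tile M → ℝ) (δ : ℝ) (Q : Tile M) :
    mf b δ Q = ∑ R ∈ Finset.univ.filter (fun R => mgood b δ R Q), b R := by
  suffices H : ∀ n, ∀ Q : Tile M, (Q.k + (M:ℤ)).toNat = n →
      mf b δ Q = ∑ R ∈ Finset.univ.filter (fun R => mgood b δ R Q), b R from H _ Q rfl
  intro n
  induction n using Nat.strong_induction_on with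
  | _ n IH =>
  intro Q hn
  by_cases h : -(M:ℤ) < Q.k
  · set c₁ := Q.lchild h with hc₁def
    set c₂ := Q.rchild h with hc₂def
    have hkc₁ : c₁.k = Q.k - 1 := rfl
    have hkc₂ : c₂.k = Q.k - 1 := rfl
    have hm1 : (c₁.k + (M:ℤ)).toNat < n := by omega
    have hm2 : (c₂.k + (M:ℤ)).toNat < n := by omega
    have hc1le : c₁ ≤ Q := Tile.lchild_le Q h
    have hc2le : c₂ ≤ Q := Tile.rchild_le Q h
    have hc1ne : c₁ ≠ Q := Tile.lchild_ne Q h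
    have hc2ne : c₂ ≠ Q := Tile.rchild_ne Q h
    have hnc : ¬(c₁ ≤ c₂ ∨ c₂ ≤ c₁) := Tile.children_not_comp Q h
    -- transfer lemmas
    have key1 : ∀ R c, (c = c₁ ∨ c = c₂) → mgood b δ R Q → R ≤ c → ¬ MStop b δ c ∧ mgood b δ R c := by
      intro R c hcc hg hRc
      have hcle : c ≤ Q := by rcases hcc with rfl | rfl; exacts [hc1le, hc2le]
      have hcne : c ≠ Q := by rcases hcc with rfl | rfl; exacts [hc1ne, hc2ne]
      refine ⟨hg.2 c hRc hcle hcne, hRc, fun S h1 h2 h3 => ?_⟩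
      refine hg.2 S h1 (h2.trans hcle) ?_
      rintro rfl
      exact hcne (le_antisymm hcle h2)
    have key2 : ∀ R c, (c = c₁ ∨ c = c₂) → ¬ MStop b δ c → mgood b δ R c → mgood b δ R Q := by
      intro R c hcc hst hg
      have hcle : c ≤ Q := by rcases hcc with rfl | rfl; exacts [hc1le, hc2le]
      refine ⟨hg.1.trans hcle, fun S h1 h2 h3 => ?_⟩
      have hSc : S ≤ c := by
        rcases Tile.le_child Q S h h2 h3 with hS | hS
        · rcases hcc with rfl | rfl
          · exact hS
          · exact absurd (Tile.le_total_of_le (h1.trans hS) hg.1) hnc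
        · rcases hcc with rfl | rfl
          · exact absurd (Tile.le_total_of_le hg.1 (h1.trans hS)) hnc
          · exact hS
      by_cases hSeq : S = c
      · subst hSeq; exact hst
      · exact hg.2 S h1 hSc hSeq
    set F₁ : Finset (Tile M) :=
      if MStop b δ c₁ then ∅ else Finset.univ.filter (fun R => mgood b δ R c₁) with hF₁
    set F₂ : Finset (Tile M) :=
      if MStop b δ c₂ then ∅ else Finset.univ.filter (fun R => mgood b δ R c₂) with hF₂
    have hQ1 : Q ∉ F₁ ∪ F₂ := by
      intro hQmem
      rcases Finset.mem_union.1 hQmem with hm | hm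
      · by_cases s1 : MStop b δ c₁
        · rw [hF₁, if_pos s1] at hm; exact absurd hm (Finset.notMem_empty Q)
        · rw [hF₁, if_neg s1] at hm
          exact hc1ne (le_antisymm hc1le (Finset.mem_filter.1 hm).2.1)
      · by_cases s2 : MStop b δ c₂
        · rw [hF₂, if_pos s2] at hm; exact absurd hm (Finset.notMem_empty Q)
        · rw [hF₂, if_neg s2] at hm
          exact hc2ne (le_antisymm hc2le (Finset.mem_filter.1 hm).2.1)
    have hdisj : Disjoint F₁ F₂ := by
      rw [Finset.disjoint_left]
      intro R hm1 hm2
      by_cases s1 : MStop b δ c₁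
      · rw [hF₁, if_pos s1] at hm1; exact absurd hm1 (Finset.notMem_empty R)
      by_cases s2 : MStop b δ c₂
      · rw [hF₂, if_pos s2] at hm2; exact absurd hm2 (Finset.notMem_empty R)
      rw [hF₁, if_neg s1] at hm1
      rw [hF₂, if_neg s2] at hm2
      exact hnc (Tile.le_total_of_le (Finset.mem_filter.1 hm1).2.1 (Finset.mem_filter.1 hm2).2.1)
    have hFeq : Finset.univ.filter (fun R => mgood b δ R Q) = insert Q (F₁ ∪ F₂) := by
      ext R
      simp only [Finset.mem_filter, Finset.mem_univ, true_and, Finset.mem_insert,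
        Finset.mem_union]
      constructor
      · intro hg
        by_cases hRQ : R = Q
        · exact Or.inl hRQ
        right
        rcases Tile.le_child Q R h hg.1 hRQ with hR | hR
        · left
          obtain ⟨hst, hgc⟩ := key1 R c₁ (Or.inl rfl) hg hR
          rw [hF₁, if_neg hst]
          exact Finset.mem_filter.2 ⟨Finset.mem_univ R, hgc⟩
        · right
          obtain ⟨hst, hgc⟩ := key1 R c₂ (Or.inr rfl) hg hR
          rw [hF₂, if_neg hst]
          exact Finset.mem_filter.2 ⟨Finset.mem_univ R, hgc⟩
      · rintro (rfl | hm | hm)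
        · exact mgood_self b δ _
        · by_cases s1 : MStop b δ c₁
          · rw [hF₁, if_pos s1] at hm; exact absurd hm (Finset.notMem_empty R)
          · rw [hF₁, if_neg s1] at hm
            exact key2 R c₁ (Or.inl rfl) s1 (Finset.mem_filter.1 hm).2
        · by_cases s2 : MStop b δ c₂
          · rw [hF₂, if_pos s2] at hm; exact absurd hm (Finset.notMem_empty R)
          · rw [hF₂, if_neg s2] at hm
            exact key2 R c₂ (Or.inr rfl) s2 (Finset.mem_filter.1 hm).2
    have e1 : ∑ R ∈ F₁, b R = if δ * c₁.len ≤ mf b δ c₁ then 0 else mf b δ c₁ := by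
      by_cases s1 : MStop b δ c₁
      · rw [hF₁, if_pos s1, Finset.sum_empty]
        exact (if_pos (show δ * c₁.len ≤ mf b δ c₁ from s1)).symm
      · rw [hF₁, if_neg s1, if_neg (show ¬(δ * c₁.len ≤ mf b δ c₁) from s1)]
        exact (IH _ hm1 c₁ rfl).symm
    have e2 : ∑ R ∈ F₂, b R = if δ * c₂.len ≤ mf b δ c₂ then 0 else mf b δ c₂ := by
      by_cases s2 : MStop b δ c₂
      · rw [hF₂, if_pos s2, Finset.sum_empty]
        exact (if_pos (show δ * c₂.len ≤ mf b δ c₂ from s2)).symm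
      · rw [hF₂, if_neg s2, if_neg (show ¬(δ * c₂.len ≤ mf b δ c₂) from s2)]
        exact (IH _ hm2 c₂ rfl).symm
    rw [hFeq, Finset.sum_insert hQ1, Finset.sum_union hdisj, e1, e2, mf_rec b δ Q h]
    ring

  · have hQ : Finset.univ.filter (fun R => mgood b δ R Q) = {Q} := by
      ext R
      simp only [Finset.mem_filter, Finset.mem_univ, true_and, Finset.mem_singleton]
      constructor
      · rintro ⟨h1, _⟩
        by_contra hne
        have := Tile.k_lt_of_lt h1 hne
        have := R.hk_lb
        omega
      · rintro rfl; exact mgood_self b δ _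
    rw [hQ, Finset.sum_singleton, mf_rec_base b δ Q h]

/-! ### maxSize helpers -/

lemma Tree.ext' {T T' : Tree M} (h1 : T.tiles = T'.tiles) (h2 : T.top = T'.top) : T = T' := by
  cases T; cases T'; simp_all

instance : Finite (Tree M) := by
  exact Finite.of_injective (fun T : Tree M => (T.tiles, T.top))
    (fun T T' h => Tree.ext' (congrArg Prod.fst h) (congrArg Prod.snd h))

lemma finsum_mem_eq_sum_filter (S : Set (Tile M)) (f : Tile M → ℝ) :
    ∑ᶠ P ∈ S, f P = ∑ P ∈ Finset.univ.filter (fun P => P ∈ S), f P := by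
  rw [← finsum_mem_coe_finset]
  congr 1
  ext P
  simp

lemma maxSize_bddAbove (a : Tile M → ℝ) (PP : Set (Tile M)) :
    BddAbove (insert (0:ℝ) {s : ℝ | ∃ T : Tree M, T.tiles ⊆ PP ∧ IsConvex T.tiles ∧ s = treeSize a T}) := by
  apply Set.Finite.bddAbove
  apply Set.Finite.insert
  have : {s : ℝ | ∃ T : Tree M, T.tiles ⊆ PP ∧ IsConvex T.tiles ∧ s = treeSize a T} ⊆
      Set.range (treeSize a) := by
    rintro s ⟨T, _, _, rfl⟩; exact ⟨T, rfl⟩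
  exact (Set.finite_range (treeSize a)).subset this

lemma treeSize_le_maxSize {a : Tile M → ℝ} {PP : Set (Tile M)} {T : Tree M}
    (h1 : T.tiles ⊆ PP) (h2 : IsConvex T.tiles) : treeSize a T ≤ maxSize a PP :=
  le_csSup (maxSize_bddAbove a PP) (Set.mem_insert_of_mem _ ⟨T, h1, h2, rfl⟩)

lemma maxSize_le {a : Tile M → ℝ} {PP : Set (Tile M)} {c : ℝ} (hc : 0 ≤ c)
    (h : ∀ T : Tree M, T.tiles ⊆ PP → IsConvex T.tiles → treeSize a T ≤ c) :
    maxSize a PP ≤ c := by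
  apply csSup_le (Set.insert_nonempty _ _)
  rintro s (rfl | ⟨T, h1, h2, rfl⟩)
  · exact hc
  · exact h T h1 h2

/-- The complete tree below `P` inside a convex set `PP`. -/
def cTreeIn (PP : Set (Tile M)) (P : Tile M) (hP : P ∈ PP) : Tree M where
  tiles := {Q | Q ∈ PP ∧ Q ≤ P}
  top := P
  top_mem := ⟨hP, le_rfl⟩
  le_top := fun Q hQ => (hQ : Q ∈ PP ∧ Q ≤ P).2

lemma cTreeIn_convex {PP : Set (Tile M)} (hPP : IsConvex PP) (P : Tile M) (hP : P ∈ PP) :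
    IsConvex (cTreeIn PP P hP).tiles := by
  intro P₁ hP₁ P₂ hP₂ Q h1 h2
  exact ⟨hPP P₁ hP₁.1 P₂ hP₂.1 Q h1 h2, Tile.le_trans h2 hP₂.2⟩

/-- Mass below any tile `J` is controlled: `σ(J) ≤ C₀ |I_J|`. -/
lemma sigma_le {T₀ : Tree M} {a : Tile M → ℝ} {C₀ : ℝ}
    (ha : ∀ P, 0 ≤ a P) (hconv : IsConvex T₀.tiles) (hsize : maxSize a T₀.tiles ≤ C₀)
    (hC₀ : 0 ≤ C₀) (J : Tile M) :
    ∑ R ∈ Finset.univ.filter (fun R => R ∈ T₀.tiles ∧ R ≤ J), a R ≤ C₀ * J.len := by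
  classical
  set S : Finset (Tile M) := Finset.univ.filter (fun R => R ∈ T₀.tiles ∧ R ≤ J) with hS
  -- complete tree bound
  have hct : ∀ P, P ∈ T₀.tiles →
      ∑ R ∈ Finset.univ.filter (fun R => R ∈ T₀.tiles ∧ R ≤ P), a R ≤ C₀ * P.len := by
    intro P hP
    have h1 : treeSize a (cTreeIn T₀.tiles P hP) ≤ C₀ :=
      (treeSize_le_maxSize (fun Q (hQ : Q ∈ (cTreeIn T₀.tiles P hP).tiles) => hQ.1) (cTreeIn_convex hconv P hP)).trans hsize
    rw [treeSize, finsum_mem_eq_sum_filter] at h1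
    have hlen : (0:ℝ) < (cTreeIn T₀.tiles P hP).len := P.len_pos
    rw [div_le_iff₀ hlen] at h1
    calc ∑ R ∈ Finset.univ.filter (fun R => R ∈ T₀.tiles ∧ R ≤ P), a R
        = ∑ R ∈ Finset.univ.filter (fun R => R ∈ (cTreeIn T₀.tiles P hP).tiles), a R := by
          apply Finset.sum_congr _ (fun _ _ => rfl)
          ext R; simp only [Finset.mem_filter, Finset.mem_univ, true_and]; rfl
      _ ≤ C₀ * P.len := h1
  -- choose maximal elements
  have hmax : ∀ R : Tile M, ∃ mR : Tile M, R ∈ S →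
      (mR ∈ S ∧ R ≤ mR ∧ ∀ Q ∈ S, mR ≤ Q → Q = mR) := by
    intro R
    by_cases hR : R ∈ S
    · have hch : {Q : Tile M | Q ∈ S ∧ R ≤ Q}.Finite := Set.toFinite _
      have hne : {Q : Tile M | Q ∈ S ∧ R ≤ Q}.Nonempty := ⟨R, hR, le_rfl⟩
      obtain ⟨mR, hmem, hmax⟩ := Set.Finite.exists_maximalFor id _ hch hne
      refine ⟨mR, fun _ => ⟨hmem.1, hmem.2, fun Q hQ hle => ?_⟩⟩
      -- Q ∈ S, mR ≤ Q; then Q ∈ the chain set since R ≤ mR ≤ Q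
      exact le_antisymm (hmax ⟨hQ, hmem.2.trans hle⟩ hle) hle
    · exact ⟨R, fun h => absurd h hR⟩
  choose mu hmu using hmax
  -- fibers
  have hfib : ∀ R ∈ S, mu R ∈ S.image mu := fun R hR => Finset.mem_image_of_mem mu hR
  rw [hS] at *
  rw [← Finset.sum_fiberwise_of_maps_to hfib a]
  have hinner : ∀ P ∈ S.image mu, ∑ R ∈ S.filter (fun R => mu R = P), a R ≤ C₀ * P.len := by
    intro P hP
    obtain ⟨R₀, hR₀, rfl⟩ := Finset.mem_image.1 hP
    have hmuS := (hmu R₀ hR₀).1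
    have hPT : mu R₀ ∈ T₀.tiles := (Finset.mem_filter.1 hmuS).2.1
    refine le_trans ?_ (hct (mu R₀) hPT)
    apply Finset.sum_le_sum_of_subset_of_nonneg
    · intro R hR
      obtain ⟨hRS, hRmu⟩ := Finset.mem_filter.1 hR
      obtain ⟨_, hRT, _⟩ := Finset.mem_filter.1 hRS
      refine Finset.mem_filter.2 ⟨Finset.mem_univ R, hRT, ?_⟩
      rw [← hRmu]
      exact (hmu R hRS).2.1
    · exact fun R _ _ => ha R
  calc ∑ P ∈ S.image mu, ∑ R ∈ S.filter (fun R => mu R = P), a R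
      ≤ ∑ P ∈ S.image mu, C₀ * P.len := Finset.sum_le_sum hinner
    _ = C₀ * ∑ P ∈ S.image mu, P.len := by rw [Finset.mul_sum]
    _ ≤ C₀ * J.len := by
        apply mul_le_mul_of_nonneg_left _ hC₀
        apply sum_len_le
        · intro P hP
          obtain ⟨R₀, hR₀, rfl⟩ := Finset.mem_image.1 hP
          exact (Finset.mem_filter.1 (hmu R₀ hR₀).1).2.2
        · intro P hP Q hQ hne
          obtain ⟨R₁, hR₁, rfl⟩ := Finset.mem_image.1 hP
          obtain ⟨R₂, hR₂, rfl⟩ := Finset.mem_image.1 hQ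
          apply Tile.disjoint_of_incomp
          · intro hle
            exact hne ((hmu R₁ hR₁).2.2 (mu R₂) (hmu R₂ hR₂).1 hle).symm
          · intro hle
            exact hne ((hmu R₂ hR₂).2.2 (mu R₁) (hmu R₁ hR₁).1 hle)

theorem chop_main (C₀ δ : ℝ) (hδ : 0 < δ) (hδC : δ ≤ C₀) (M : ℕ) (T₀ : Tree M)
    (a : Tile M → ℝ) (ha : ∀ P, 0 ≤ a P) (hconv : IsConvex T₀.tiles)
    (hsize : maxSize a T₀.tiles ≤ C₀) :
    ∃ (TT : Set (Tree M)) (PP : Set (Tile M)),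
      T₀.tiles = (⋃ T ∈ TT, T.tiles) ∪ PP ∧
      (TT.Pairwise fun T T' => Disjoint T.tiles T'.tiles) ∧
      (∀ T ∈ TT, Disjoint T.tiles PP) ∧
      (∀ T ∈ TT, T.tiles ⊆ T₀.tiles ∧ IsConvex T.tiles ∧ maxSize a T.tiles ≤ δ) ∧
      (∀ P ∈ PP, a P ≤ C₀ * P.len) ∧
      IsUniformPacking (C₀/δ + 2) PP T₀ ∧
      IsUniformPacking (C₀/δ + 2) (Tree.top '' TT) T₀ := by
  classical
  have hC₀ : 0 ≤ C₀ := le_trans hδ.le hδC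
  set b : Tile M → ℝ := fun P => if P ∈ T₀.tiles then a P else 0 with hb
  have hb0 : ∀ P, 0 ≤ b P := by
    intro P; rw [hb]; dsimp only; split
    · exact ha P
    · exact le_rfl
  have hba : ∀ P ∈ T₀.tiles, b P = a P := by
    intro P hP; rw [hb]; dsimp only; rw [if_pos hP]
  set Stp : Tile M → Prop := fun P => MStop b δ P ∨ P = T₀.top with hStp
  -- σ bound with b
  have hsigma : ∀ J : Tile M,
      ∑ R ∈ Finset.univ.filter (fun R => R ∈ T₀.tiles ∧ R ≤ J), b R ≤ C₀ * J.len := by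
    intro J
    refine le_trans (le_of_eq (Finset.sum_congr rfl fun R hR => ?_))
      (sigma_le ha hconv hsize hC₀ J)
    exact hba R (Finset.mem_filter.1 hR).2.1
  -- the minimal stopping tile above R
  have hex : ∀ R : Tile M, ∃ s : Tile M, R ∈ T₀.tiles →
      (Stp s ∧ R ≤ s ∧ s ∈ T₀.tiles ∧ ∀ Q, R ≤ Q → Stp Q → s ≤ Q) := by
    intro R
    by_cases hR : R ∈ T₀.tiles
    · have hne : {Q : Tile M | R ≤ Q ∧ Q ≤ T₀.top ∧ Stp Q}.Nonempty :=
        ⟨T₀.top, T₀.le_top R hR, le_rfl, Or.inr rfl⟩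
      obtain ⟨s, hmem, hmin⟩ := Set.Finite.exists_minimalFor id _ (Set.toFinite _) hne
      refine ⟨s, fun _ => ⟨hmem.2.2, hmem.1, hconv R hR T₀.top T₀.top_mem s hmem.1 hmem.2.1,
        fun Q hRQ hQs => ?_⟩⟩
      rcases Tile.le_total_of_le hmem.1 hRQ with h | h
      · exact h
      · exact le_of_eq (show s = Q from le_antisymm (hmin ⟨hRQ, h.trans hmem.2.1, hQs⟩ h) h)
    · exact ⟨R, fun h => absurd h hR⟩
  choose sf hsf using hex
  -- the top of the tree containing R
  have hexA : ∀ R : Tile M, ∃ A : Tile M, (R ∈ T₀.tiles ∧ ¬ Stp R) →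
      (R ≤ A ∧ A ≤ sf R ∧ A ≠ sf R ∧ A ∈ T₀.tiles ∧ ¬ Stp A ∧
        ∀ Q, R ≤ Q → Q ≤ sf R → Q ≠ sf R → Q ≤ A) := by
    intro R
    by_cases hR : R ∈ T₀.tiles ∧ ¬ Stp R
    · obtain ⟨hRT, hRs⟩ := hR
      obtain ⟨hs1, hs2, hs3, hs4⟩ := hsf R hRT
      have hne : {Q : Tile M | R ≤ Q ∧ Q ≤ sf R ∧ Q ≠ sf R}.Nonempty :=
        ⟨R, le_rfl, hs2, fun h => hRs (by rw [h]; exact hs1)⟩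
      obtain ⟨A, hmem, hmax⟩ := Set.Finite.exists_maximalFor id _ (Set.toFinite _) hne
      have hmaxp : ∀ Q, R ≤ Q → Q ≤ sf R → Q ≠ sf R → Q ≤ A := by
        intro Q h1 h2 h3
        rcases Tile.le_total_of_le hmem.1 h1 with h | h
        · exact le_of_eq (show A = Q from le_antisymm h (hmax ⟨h1, h2, h3⟩ h)).symm
        · exact h
      have hAT : A ∈ T₀.tiles :=
        hconv R hRT T₀.top T₀.top_mem A hmem.1 (hmem.2.1.trans (T₀.le_top _ hs3))
      have hAns : ¬ Stp A := by
        intro h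
        exact hmem.2.2 (le_antisymm hmem.2.1 (hs4 A hmem.1 h))
      exact ⟨A, fun _ => ⟨hmem.1, hmem.2.1, hmem.2.2, hAT, hAns, hmaxp⟩⟩
    · exact ⟨R, fun h => absurd h hR⟩
  choose Af hAf using hexA
  set TOS : Tile M → Set (Tile M) :=
    fun A => {R | R ∈ T₀.tiles ∧ R ≤ A ∧ ∀ Q, R ≤ Q → Q ≤ A → ¬ Stp Q} with hTOS
  set PP : Set (Tile M) := {P | P ∈ T₀.tiles ∧ Stp P} with hPP
  set tops : Set (Tile M) := {A | ∃ R, R ∈ T₀.tiles ∧ ¬ Stp R ∧ A = Af R} with htops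
  set TT : Set (Tree M) :=
    {T | (∃ R, R ∈ T₀.tiles ∧ ¬ Stp R ∧ T.top = Af R) ∧ T.tiles = TOS T.top} with hTT
  -- facts about tops
  have hTop : ∀ A ∈ tops, A ∈ T₀.tiles ∧ ¬ Stp A ∧ A ≤ sf A ∧ A ≠ sf A ∧ Stp (sf A) ∧
      sf A ∈ T₀.tiles ∧ ∀ Q, A ≤ Q → Q ≤ sf A → Q ≠ sf A → Q ≤ A := by
    rintro A ⟨R, hRT, hRs, rfl⟩
    obtain ⟨h1, h2, h3, h4, h5, h6⟩ := hAf R ⟨hRT, hRs⟩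
    obtain ⟨hsA1, hsA2, hsA3, hsA4⟩ := hsf (Af R) h4
    obtain ⟨hsR1, hsR2, hsR3, hsR4⟩ := hsf R hRT
    have hsfeq : sf (Af R) = sf R :=
      le_antisymm (hsA4 (sf R) h2 hsR1) (hsR4 (sf (Af R)) (h1.trans hsA2) hsA1)
    refine ⟨h4, h5, hsA2, fun h => h5 (by rw [h]; exact hsA1), hsA1, hsA3, ?_⟩
    intro Q hq1 hq2 hq3
    rw [hsfeq] at hq2 hq3
    exact h6 Q (h1.trans hq1) hq2 hq3
  -- distinct tops with the same stopping tile are disjoint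
  have hInc : ∀ A₁ ∈ tops, ∀ A₂ ∈ tops, sf A₁ = sf A₂ → A₁ ≠ A₂ →
      Disjoint A₁.ival A₂.ival := by
    intro A₁ h₁ A₂ h₂ hsfeq hne
    obtain ⟨_, _, hA1le, hA1ne, _, _, hmax1⟩ := hTop A₁ h₁
    obtain ⟨_, _, hA2le, hA2ne, _, _, hmax2⟩ := hTop A₂ h₂
    apply Tile.disjoint_of_incomp
    · intro hle
      exact hne (le_antisymm hle (hmax1 A₂ hle (hsfeq ▸ hA2le) (by rw [← hsfeq] at hA2ne; exact hA2ne)))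
    · intro hle
      exact hne (le_antisymm (hmax2 A₁ hle (hsfeq ▸ hA1le) (by rw [hsfeq] at hA1ne; exact hA1ne)) hle)
  -- membership in a tree determines the top
  have hUniq : ∀ R A, R ∈ TOS A → A ∈ tops → R ∈ T₀.tiles ∧ ¬ Stp R ∧ A = Af R := by
    intro R A hRT hAt
    obtain ⟨hR1, hR2, hR3⟩ := hRT
    have hRns : ¬ Stp R := hR3 R le_rfl hR2
    obtain ⟨hA1, hA2, hA3, hA4, hA5, hA6, hA7⟩ := hTop A hAt
    obtain ⟨hsR1, hsR2, hsR3, hsR4⟩ := hsf R hR1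
    have hAsfR : A ≤ sf R := by
      rcases Tile.le_total_of_le hR2 hsR2 with h | h
      · exact h
      · exact absurd hsR1 (hR3 (sf R) hsR2 h)
    have hsfeq : sf R = sf A := by
      obtain ⟨hsA1, hsA2, hsA3, hsA4⟩ := hsf A hA1
      exact le_antisymm (hsR4 (sf A) (hR2.trans hsA2) hsA1) (hsA4 (sf R) hAsfR hsR1)
    obtain ⟨hf1, hf2, hf3, hf4, hf5, hf6⟩ := hAf R ⟨hR1, hRns⟩
    have hAne : A ≠ sf R := by
      intro h; exact hA2 (by rw [h]; exact hsR1)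
    have h1 : A ≤ Af R := hf6 A hR2 hAsfR hAne
    have h2 : Af R ≤ A := by
      apply hA7 (Af R) h1
      · rw [← hsfeq]; exact hf2
      · rw [← hsfeq]; exact hf3
    exact ⟨hR1, hRns, le_antisymm h1 h2⟩
  -- tree construction
  have hmkTree : ∀ R, R ∈ T₀.tiles → ¬ Stp R →
      ∃ T : Tree M, T ∈ TT ∧ T.top = Af R ∧ T.tiles = TOS (Af R) := by
    intro R hR hs
    obtain ⟨h1, h2, h3, h4, h5, h6⟩ := hAf R ⟨hR, hs⟩
    have htopmem : Af R ∈ TOS (Af R) := by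
      refine ⟨h4, le_rfl, ?_⟩
      intro Q hq1 hq2
      have : Q = Af R := le_antisymm hq2 hq1
      rw [this]; exact h5
    exact ⟨⟨TOS (Af R), Af R, htopmem, fun P hP => hP.2.1⟩, ⟨⟨R, hR, hs, rfl⟩, rfl⟩, rfl, rfl⟩
  have htopsEq : Tree.top '' TT = tops := by
    ext A
    constructor
    · rintro ⟨T, hT, rfl⟩
      exact hT.1
    · rintro ⟨R, h1, h2, rfl⟩
      obtain ⟨T, hT, htop, _⟩ := hmkTree R h1 h2
      exact ⟨T, hT, htop⟩
  -- the fundamental packing estimate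
  have packP : ∀ J : Tile M,
      ∑ P ∈ Finset.univ.filter (fun P => P ∈ T₀.tiles ∧ Stp P ∧ P ≤ J), P.len
        ≤ (C₀/δ + 1) * J.len := by
    intro J
    have hJ : (0:ℝ) < J.len := J.len_pos
    set F' : Finset (Tile M) :=
      Finset.univ.filter (fun P => P ∈ T₀.tiles ∧ MStop b δ P ∧ P ≤ J) with hF'
    set Ft : Finset (Tile M) :=
      Finset.univ.filter (fun P => P = T₀.top ∧ P ≤ J) with hFt
    have hsub : Finset.univ.filter (fun P => P ∈ T₀.tiles ∧ Stp P ∧ P ≤ J) ⊆ F' ∪ Ft := by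
      intro P hP
      obtain ⟨_, hPT, hPs, hPJ⟩ := Finset.mem_filter.1 hP
      rcases hPs with hPs | hPs
      · exact Finset.mem_union_left _ (Finset.mem_filter.2 ⟨Finset.mem_univ _, hPT, hPs, hPJ⟩)
      · exact Finset.mem_union_right _ (Finset.mem_filter.2 ⟨Finset.mem_univ _, hPs, hPJ⟩)
    have hsplit : ∑ P ∈ F' ∪ Ft, P.len ≤ ∑ P ∈ F', P.len + ∑ P ∈ Ft, P.len := by
      have h0 : (0:ℝ) ≤ ∑ P ∈ F' ∩ Ft, P.len := Finset.sum_nonneg fun P _ => P.len_pos.le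
      have := Finset.sum_union_inter (s₁ := F') (s₂ := Ft) (f := Tile.len)
      linarith
    have hFt : ∑ P ∈ Ft, P.len ≤ J.len := by
      rcases Finset.eq_empty_or_nonempty Ft with h | ⟨P₀, hP₀⟩
      · rw [h, Finset.sum_empty]; exact hJ.le
      · obtain ⟨_, hP₀t, hP₀J⟩ := Finset.mem_filter.1 hP₀
        have : Ft = {P₀} := by
          apply Finset.eq_singleton_iff_unique_mem.2 ⟨hP₀, ?_⟩
          intro Q hQ
          obtain ⟨_, hQt, _⟩ := Finset.mem_filter.1 hQ
          rw [hQt, hP₀t]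
        rw [this, Finset.sum_singleton]
        exact Tile.len_le_of_le hP₀J
    -- core estimate
    have hcore : ∑ P ∈ F', P.len ≤ (C₀/δ) * J.len := by
      have h1 : ∀ P ∈ F', P.len ≤ mf b δ P / δ := by
        intro P hP
        obtain ⟨_, _, hms, _⟩ := Finset.mem_filter.1 hP
        rw [le_div_iff₀ hδ]
        calc P.len * δ = δ * P.len := by ring
          _ ≤ mf b δ P := hms
      have hdisjG : ∀ P₁ ∈ F', ∀ P₂ ∈ F', P₁ ≠ P₂ →
          Disjoint (Finset.univ.filter (fun R => mgood b δ R P₁))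
            (Finset.univ.filter (fun R => mgood b δ R P₂)) := by
        intro P₁ hP₁ P₂ hP₂ hne
        rw [Finset.disjoint_left]
        intro R hm1 hm2
        obtain ⟨_, hg1⟩ := Finset.mem_filter.1 hm1
        obtain ⟨_, hg2⟩ := Finset.mem_filter.1 hm2
        rcases Tile.le_total_of_le hg1.1 hg2.1 with h | h
        · exact hg2.2 P₁ hg1.1 h hne ((Finset.mem_filter.1 hP₁).2.2.1)
        · exact hg1.2 P₂ hg2.1 h (Ne.symm hne) ((Finset.mem_filter.1 hP₂).2.2.1)
      have h2 : ∑ P ∈ F', mf b δ P ≤ C₀ * J.len := by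
        have e1 : ∑ P ∈ F', mf b δ P =
            ∑ R ∈ F'.biUnion (fun P => Finset.univ.filter (fun R => mgood b δ R P)), b R := by
          rw [Finset.sum_biUnion]
          · exact Finset.sum_congr rfl fun P _ => mf_eq_sum b δ P
          · intro P₁ hP₁ P₂ hP₂ hne
            exact hdisjG P₁ hP₁ P₂ hP₂ hne
        rw [e1]
        have e2 : ∑ R ∈ F'.biUnion (fun P => Finset.univ.filter (fun R => mgood b δ R P)), b R
            ≤ ∑ R ∈ Finset.univ.filter (fun R => R ≤ J), b R := by
          apply Finset.sum_le_sum_of_subset_of_nonneg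
          · intro R hR
            obtain ⟨P, hP, hRP⟩ := Finset.mem_biUnion.1 hR
            obtain ⟨_, hg⟩ := Finset.mem_filter.1 hRP
            exact Finset.mem_filter.2 ⟨Finset.mem_univ _,
              hg.1.trans (Finset.mem_filter.1 hP).2.2.2⟩
          · exact fun R _ _ => hb0 R
        have e3 : ∑ R ∈ Finset.univ.filter (fun R => R ≤ J), b R
            = ∑ R ∈ Finset.univ.filter (fun R => R ∈ T₀.tiles ∧ R ≤ J), b R := by
          symm
          apply Finset.sum_subset
          · intro R hR
            exact Finset.mem_filter.2 ⟨Finset.mem_univ _, (Finset.mem_filter.1 hR).2.2⟩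
          · intro R hRJ hRnot
            rw [hb]
            dsimp only
            rw [if_neg]
            intro hRT
            exact hRnot (Finset.mem_filter.2 ⟨Finset.mem_univ _, hRT,
              (Finset.mem_filter.1 hRJ).2⟩)
        calc _ ≤ ∑ R ∈ Finset.univ.filter (fun R => R ≤ J), b R := e2
          _ = _ := e3
          _ ≤ C₀ * J.len := hsigma J
      calc ∑ P ∈ F', P.len ≤ ∑ P ∈ F', mf b δ P / δ := Finset.sum_le_sum h1
        _ = (∑ P ∈ F', mf b δ P) / δ := by rw [Finset.sum_div]
        _ ≤ (C₀ * J.len) / δ := by gcongr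
        _ = (C₀/δ) * J.len := by ring
    calc ∑ P ∈ Finset.univ.filter (fun P => P ∈ T₀.tiles ∧ Stp P ∧ P ≤ J), P.len
        ≤ ∑ P ∈ F' ∪ Ft, P.len :=
          Finset.sum_le_sum_of_subset_of_nonneg hsub fun P _ _ => P.len_pos.le
      _ ≤ ∑ P ∈ F', P.len + ∑ P ∈ Ft, P.len := hsplit
      _ ≤ (C₀/δ) * J.len + J.len := add_le_add hcore hFt
      _ = (C₀/δ + 1) * J.len := by ring
  -- packing of the tops
  have packT : ∀ J : Tile M,
      ∑ A ∈ Finset.univ.filter (fun A => A ∈ tops ∧ A ≤ J), A.len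
        ≤ (C₀/δ + 2) * J.len := by
    intro J
    have hJ : (0:ℝ) < J.len := J.len_pos
    set FT : Finset (Tile M) := Finset.univ.filter (fun A => A ∈ tops ∧ A ≤ J) with hFTdef
    have hmapsto : ∀ A ∈ FT, sf A ∈ FT.image sf := fun A hA => Finset.mem_image_of_mem sf hA
    rw [← Finset.sum_fiberwise_of_maps_to hmapsto Tile.len]
    set I₁ : Finset (Tile M) := (FT.image sf).filter (fun s' => s' ≤ J) with hI₁
    set I₂ : Finset (Tile M) := (FT.image sf).filter (fun s' => ¬ s' ≤ J) with hI₂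
    have himg : FT.image sf = I₁ ∪ I₂ := (Finset.filter_union_filter_not_eq ..).symm
    have hdisjI : Disjoint I₁ I₂ := Finset.disjoint_filter_filter_not _ _ _
    rw [himg, Finset.sum_union hdisjI]
    -- fibers are families of pairwise disjoint tiles
    have hfib : ∀ s' ∈ FT.image sf, ∀ A₁ ∈ FT.filter (fun A => sf A = s'),
        ∀ A₂ ∈ FT.filter (fun A => sf A = s'), A₁ ≠ A₂ → Disjoint A₁.ival A₂.ival := by
      intro s' _ A₁ h₁ A₂ h₂ hne
      obtain ⟨h₁f, h₁s⟩ := Finset.mem_filter.1 h₁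
      obtain ⟨h₂f, h₂s⟩ := Finset.mem_filter.1 h₂
      obtain ⟨_, h₁t, _⟩ := Finset.mem_filter.1 h₁f
      obtain ⟨_, h₂t, _⟩ := Finset.mem_filter.1 h₂f
      exact hInc A₁ h₁t A₂ h₂t (by rw [h₁s, h₂s]) hne
    have hb1 : ∑ s' ∈ I₁, ∑ A ∈ FT.filter (fun A => sf A = s'), A.len
        ≤ (C₀/δ + 1) * J.len := by
      have step1 : ∀ s' ∈ I₁, ∑ A ∈ FT.filter (fun A => sf A = s'), A.len ≤ s'.len := by
        intro s' hs'
        obtain ⟨hs'i, _⟩ := Finset.mem_filter.1 hs'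
        apply sum_len_le
        · intro A hA
          obtain ⟨hAf', hAs⟩ := Finset.mem_filter.1 hA
          obtain ⟨_, hAt, _⟩ := Finset.mem_filter.1 hAf'
          have := (hTop A hAt).2.2.1
          rw [hAs] at this
          exact this
        · exact hfib s' hs'i
      calc ∑ s' ∈ I₁, ∑ A ∈ FT.filter (fun A => sf A = s'), A.len
          ≤ ∑ s' ∈ I₁, s'.len := Finset.sum_le_sum step1
        _ ≤ ∑ P ∈ Finset.univ.filter (fun P => P ∈ T₀.tiles ∧ Stp P ∧ P ≤ J), P.len := by
            apply Finset.sum_le_sum_of_subset_of_nonneg _ fun P _ _ => P.len_pos.le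
            intro s' hs'
            obtain ⟨hs'i, hs'J⟩ := Finset.mem_filter.1 hs'
            obtain ⟨A, hA, rfl⟩ := Finset.mem_image.1 hs'i
            obtain ⟨_, hAt, _⟩ := Finset.mem_filter.1 hA
            obtain ⟨hA1, _, _, _, hA5, hA6, _⟩ := hTop A hAt
            exact Finset.mem_filter.2 ⟨Finset.mem_univ _, hA6, hA5, hs'J⟩
        _ ≤ (C₀/δ + 1) * J.len := packP J
    have hb2 : ∑ s' ∈ I₂, ∑ A ∈ FT.filter (fun A => sf A = s'), A.len ≤ J.len := by
      rcases Finset.eq_empty_or_nonempty I₂ with h | ⟨s₀, hs₀⟩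
      · rw [h, Finset.sum_empty]; exact hJ.le
      · have huniq : ∀ s' ∈ I₂, s' = s₀ := by
          intro s' hs'
          obtain ⟨hs'i, hs'J⟩ := Finset.mem_filter.1 hs'
          obtain ⟨hs₀i, hs₀J⟩ := Finset.mem_filter.1 hs₀
          obtain ⟨A₁, hA₁, rfl⟩ := Finset.mem_image.1 hs'i
          obtain ⟨A₀, hA₀, rfl⟩ := Finset.mem_image.1 hs₀i
          obtain ⟨_, hA₁t, hA₁J⟩ := Finset.mem_filter.1 hA₁
          obtain ⟨_, hA₀t, hA₀J⟩ := Finset.mem_filter.1 hA₀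
          obtain ⟨hB1, _, hB3, _, hB5, hB6, _⟩ := hTop A₁ hA₁t
          obtain ⟨hC1, _, hC3, _, hC5, hC6, _⟩ := hTop A₀ hA₀t
          -- J ≤ sf A₁ and J ≤ sf A₀
          have hJ1 : J ≤ sf A₁ := by
            rcases Tile.le_total_of_le hA₁J (hB3 : A₁ ≤ sf A₁) with h | h
            · exact h
            · exact absurd h hs'J
          have hJ0 : J ≤ sf A₀ := by
            rcases Tile.le_total_of_le hA₀J (hC3 : A₀ ≤ sf A₀) with h | h
            · exact h
            · exact absurd h hs₀J
          obtain ⟨hsA₁1, hsA₁2, hsA₁3, hsA₁4⟩ := hsf A₁ hB1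
          obtain ⟨hsA₀1, hsA₀2, hsA₀3, hsA₀4⟩ := hsf A₀ hC1
          -- minimality both ways
          have e1 : sf A₁ ≤ sf A₀ := hsA₁4 (sf A₀) (hA₁J.trans hJ0) hsA₀1
          have e2 : sf A₀ ≤ sf A₁ := hsA₀4 (sf A₁) (hA₀J.trans hJ1) hsA₁1
          exact le_antisymm e1 e2
        have hI₂eq : I₂ = {s₀} := Finset.eq_singleton_iff_unique_mem.2 ⟨hs₀, huniq⟩
        rw [hI₂eq, Finset.sum_singleton]
        apply sum_len_le
        · intro A hA
          obtain ⟨hAf', _⟩ := Finset.mem_filter.1 hA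
          obtain ⟨_, _, hAJ⟩ := Finset.mem_filter.1 hAf'
          exact hAJ
        · exact hfib s₀ (Finset.mem_filter.1 hs₀).1
    calc ∑ s' ∈ I₁, ∑ A ∈ FT.filter (fun A => sf A = s'), A.len
          + ∑ s' ∈ I₂, ∑ A ∈ FT.filter (fun A => sf A = s'), A.len
        ≤ (C₀/δ + 1) * J.len + J.len := add_le_add hb1 hb2
      _ = (C₀/δ + 2) * J.len := by ring
  have packP' : ∀ (J : Tile M) (F : Finset (Tile M)),
      (∀ P, P ∈ F ↔ (P ∈ T₀.tiles ∧ Stp P ∧ P ≤ J)) →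
      ∑ P ∈ F, P.len ≤ (C₀/δ + 1) * J.len := by
    intro J F hF
    have hFe : F = Finset.univ.filter (fun P => P ∈ T₀.tiles ∧ Stp P ∧ P ≤ J) := by
      ext P
      rw [hF P, Finset.mem_filter]
      simp
    rw [hFe]
    exact packP J
  have packT' : ∀ (J : Tile M) (F : Finset (Tile M)),
      (∀ A, A ∈ F ↔ (A ∈ tops ∧ A ≤ J)) →
      ∑ A ∈ F, A.len ≤ (C₀/δ + 2) * J.len := by
    intro J F hF
    have hFe : F = Finset.univ.filter (fun A => A ∈ tops ∧ A ≤ J) := by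
      ext A
      rw [hF A, Finset.mem_filter]
      simp
    rw [hFe]
    exact packT J
  refine ⟨TT, PP, ?_, ?_, ?_, ?_, ?_, ?_, ?_⟩
  · -- partition
    ext R
    simp only [Set.mem_union, Set.mem_iUnion]
    constructor
    · intro hR
      by_cases hs : Stp R
      · exact Or.inr ⟨hR, hs⟩
      · left
        obtain ⟨T, hT, htop, htiles⟩ := hmkTree R hR hs
        refine ⟨T, hT, ?_⟩
        rw [htiles]
        obtain ⟨h1, h2, h3, h4, h5, h6⟩ := hAf R ⟨hR, hs⟩
        obtain ⟨hsR1, hsR2, hsR3, hsR4⟩ := hsf R hR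
        refine ⟨hR, h1, ?_⟩
        intro Q hq1 hq2 hQs
        exact h3 (le_antisymm h2 ((hsR4 Q hq1 hQs).trans hq2))
    · rintro (⟨T, hT, hR⟩ | hR)
      · rw [hT.2] at hR
        exact hR.1
      · exact hR.1
  · -- pairwise disjoint
    intro T hT T' hT' hne
    rw [Set.disjoint_left]
    intro R hRT hRT'
    have ht1 : T.top ∈ tops := hT.1
    have ht2 : T'.top ∈ tops := hT'.1
    have h1 := hUniq R T.top (by rw [← hT.2]; exact hRT) ht1
    have h2 := hUniq R T'.top (by rw [← hT'.2]; exact hRT') ht2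
    have heq : T.top = T'.top := by rw [h1.2.2, h2.2.2]
    exact hne (Tree.ext' (by rw [hT.2, hT'.2, heq]) heq)
  · -- disjoint from PP
    intro T hT
    rw [Set.disjoint_left]
    intro R hRT hRP
    rw [hT.2] at hRT
    exact (hRT.2.2 R le_rfl hRT.2.1) hRP.2
  · -- tree properties
    intro T hT
    have htiles := hT.2
    refine ⟨?_, ?_, ?_⟩
    · rw [htiles]; exact fun R hR => hR.1
    · rw [htiles]
      intro P₁ h₁ P₂ h₂ P l₁ l₂
      refine ⟨hconv P₁ h₁.1 P₂ h₂.1 P l₁ l₂, Tile.le_trans l₂ h₂.2.1, ?_⟩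
      intro Q hq1 hq2
      exact h₁.2.2 Q (Tile.le_trans l₁ hq1) hq2
    · apply maxSize_le hδ.le
      intro T' hsub' hconv'
      rw [htiles] at hsub'
      have hQ : T'.top ∈ TOS T.top := hsub' T'.top_mem
      have hQns : ¬ Stp T'.top := hQ.2.2 T'.top le_rfl hQ.2.1
      have hQnm : ¬ MStop b δ T'.top := fun h => hQns (Or.inl h)
      have hmf : mf b δ T'.top < δ * T'.top.len := not_le.1 hQnm
      rw [treeSize, div_le_iff₀ (show (0:ℝ) < T'.len from T'.top.len_pos),
        finsum_mem_eq_sum_filter]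
      have e1 : ∑ R ∈ Finset.univ.filter (fun R => R ∈ T'.tiles), a R
          = ∑ R ∈ Finset.univ.filter (fun R => R ∈ T'.tiles), b R := by
        refine Finset.sum_congr rfl fun R hR => ?_
        exact (hba R (hsub' (Finset.mem_filter.1 hR).2).1).symm
      rw [e1]
      have e2 : ∑ R ∈ Finset.univ.filter (fun R => R ∈ T'.tiles), b R
          ≤ ∑ R ∈ Finset.univ.filter (fun R => mgood b δ R T'.top), b R := by
        apply Finset.sum_le_sum_of_subset_of_nonneg _ fun R _ _ => hb0 R
        intro R hR
        have hRT' : R ∈ T'.tiles := (Finset.mem_filter.1 hR).2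
        have hRTOS : R ∈ TOS T.top := hsub' hRT'
        refine Finset.mem_filter.2 ⟨Finset.mem_univ _, T'.le_top R hRT', ?_⟩
        intro S h1 h2 h3
        have : ¬ Stp S := hRTOS.2.2 S h1 (Tile.le_trans h2 hQ.2.1)
        exact fun hm => this (Or.inl hm)
      calc ∑ R ∈ Finset.univ.filter (fun R => R ∈ T'.tiles), b R
          ≤ ∑ R ∈ Finset.univ.filter (fun R => mgood b δ R T'.top), b R := e2
        _ = mf b δ T'.top := (mf_eq_sum b δ T'.top).symm
        _ ≤ δ * T'.len := hmf.le
  · -- a P ≤ C₀ len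
    intro P hP
    have hPT : P ∈ T₀.tiles := hP.1
    have hsing : IsConvex ({P} : Set (Tile M)) := by
      intro P₁ h₁ P₂ h₂ Q l₁ l₂
      rw [Set.mem_singleton_iff] at h₁ h₂ ⊢
      subst h₁; subst h₂
      exact Tile.le_antisymm l₂ l₁
    have h1 : treeSize a ⟨{P}, P, rfl, fun Q hQ => by
        rw [Set.mem_singleton_iff] at hQ; rw [hQ]; exact Tile.le_refl P⟩ ≤ maxSize a T₀.tiles :=
      treeSize_le_maxSize (Set.singleton_subset_iff.2 hPT) hsing
    rw [treeSize, finsum_mem_singleton] at h1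
    have h2 : a P / P.len ≤ C₀ := h1.trans hsize
    rw [div_le_iff₀ P.len_pos] at h2
    linarith [h2]
  · -- packing PP
    refine ⟨fun P hP => hP.1, fun J => ?_⟩
    rw [finsum_mem_eq_sum_filter]
    refine le_trans (packP' J _ ?_) ?_
    · intro P
      simp only [Finset.mem_filter, Finset.mem_univ, true_and, Set.mem_setOf_eq]
      constructor
      · rintro ⟨⟨h1, h2⟩, h3⟩; exact ⟨h1, h2, h3⟩
      · rintro ⟨h1, h2, h3⟩; exact ⟨⟨h1, h2⟩, h3⟩
    · have := J.len_pos
      nlinarith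
  · -- packing tops
    rw [htopsEq]
    refine ⟨?_, fun J => ?_⟩
    · rintro A ⟨R, h1, h2, rfl⟩
      exact (hAf R ⟨h1, h2⟩).2.2.2.1
    · rw [finsum_mem_eq_sum_filter]
      refine packT' J _ fun A => ?_
      simp only [Finset.mem_filter, Finset.mem_univ, true_and, Set.mem_setOf_eq]
      exact Iff.rfl


/-- Theorem 4.1: chopping big trees into little trees. -/
theorem statement4 (C₀ δ : ℝ) (hδ : 0 < δ) (hδC : δ ≤ C₀) :
    ∃ C : ℝ, 0 < C ∧
      ∀ (M : ℕ) (T₀ : Tree M) (a : Tile M → ℝ),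
        (∀ P, 0 ≤ a P) → IsConvex T₀.tiles → maxSize a T₀.tiles ≤ C₀ →
        ∃ (TT : Set (Tree M)) (PP : Set (Tile M)),
          T₀.tiles = (⋃ T ∈ TT, T.tiles) ∪ PP ∧
          (TT.Pairwise fun T T' => Disjoint T.tiles T'.tiles) ∧
          (∀ T ∈ TT, Disjoint T.tiles PP) ∧
          (∀ T ∈ TT, T.tiles ⊆ T₀.tiles ∧ IsConvex T.tiles ∧ maxSize a T.tiles ≤ δ) ∧
          (∀ P ∈ PP, a P ≤ C₀ * P.len) ∧
          IsUniformPacking C PP T₀ ∧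
          IsUniformPacking C (Tree.top '' TT) T₀ := by
  refine ⟨C₀/δ + 2, by have : 0 < C₀ := lt_of_lt_of_le hδ hδC; positivity, ?_⟩
  intro M T₀ a ha hconv hsize
  exact chop_main C₀ δ hδ hδC M T₀ a ha hconv hsize

end Dyadic
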